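/- Let A be a commutative unital complex Banach algebra whose Gelfand transform image is self-adjoint, i.e., for every a ∈ A there exists b ∈ A such that φ(b) = conj(φ(a)) for every character φ of A. Then there do not exist a sequence (φ_n)_{n∈ℕ} of pairwise distinct characters on A and a sequence (λ_n)_{n∈ℕ} of complex numbers with ∑_{n=1}^∞ |λ_n| < ∞, not all λ_n zero, such that ∑_{n=1}^∞ λ_n φ_n(a) = 0 for every a ∈ A. -/

import Mathlib

set_option maxHeartbeats 1600000

open WeakDual

/-- If the Gelfand transform image of a commutative unital complex Banach algebra `A` is
self-adjoint, then no nonzero absolutely summable linear combination of pairwise distinct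
characters on `A` vanishes. -/
theorem no_vanishing_lin_comb_characters_of_selfAdjoint
    {A : Type*} [NormedCommRing A] [NormedAlgebra ℂ A] [CompleteSpace A]
    (hsa : ∀ a : A, ∃ b : A, ∀ φ : characterSpace ℂ A, φ b = starRingEnd ℂ (φ a)) :
    ¬ ∃ (φ : ℕ → characterSpace ℂ A) (l : ℕ → ℂ),
        Function.Injective φ ∧ (Summable fun n => ‖l n‖) ∧ (∃ n, l n ≠ 0) ∧
        ∀ a : A, ∑' n, l n * φ n a = 0 := by
  rintro ⟨φ, l, hinj, hsum, ⟨k, hk⟩, hvan⟩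
  -- the Gelfand image as a star subalgebra
  let R : StarSubalgebra ℂ C(characterSpace ℂ A, ℂ) :=
    { toSubalgebra := (gelfandTransform ℂ A).range
      star_mem' := by
        rintro f ⟨a, rfl⟩
        obtain ⟨b, hb⟩ := hsa a
        exact ⟨b, by ext ψ; simpa using (hb ψ)⟩ }
  have hRsep : R.SeparatesPoints := by
    intro x y hxy
    obtain ⟨a, ha⟩ := DFunLike.ne_iff.mp hxy
    exact ⟨_, ⟨gelfandTransform ℂ A a, ⟨a, rfl⟩, rfl⟩, by simpa using ha⟩
  have hdense : R.topologicalClosure = ⊤ :=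
    ContinuousMap.starSubalgebra_topologicalClosure_eq_top_of_separatesPoints R hRsep
  -- summability of the evaluations against any continuous function
  have hsummf : ∀ f : C(characterSpace ℂ A, ℂ), Summable fun n => l n * f (φ n) := by
    intro f
    apply Summable.of_norm
    apply Summable.of_nonneg_of_le (fun n => norm_nonneg _) (fun n => ?_)
      (hsum.mul_right ‖f‖)
    rw [norm_mul]
    exact mul_le_mul_of_nonneg_left (f.norm_coe_le_norm _) (norm_nonneg _)
  set C : ℝ := ∑' n, ‖l n‖ with hC
  have hbnd : ∀ f : C(characterSpace ℂ A, ℂ), ‖∑' n, l n * f (φ n)‖ ≤ C * ‖f‖ := by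
    intro f
    calc ‖∑' n, l n * f (φ n)‖ ≤ ∑' n, ‖l n * f (φ n)‖ :=
          norm_tsum_le_tsum_norm (hsummf f).norm
      _ ≤ ∑' n, ‖l n‖ * ‖f‖ := by
          apply Summable.tsum_le_tsum _ (hsummf f).norm (hsum.mul_right ‖f‖)
          intro n
          rw [norm_mul]
          exact mul_le_mul_of_nonneg_left (f.norm_coe_le_norm _) (norm_nonneg _)
      _ = C * ‖f‖ := by rw [hC, tsum_mul_right]
  -- the functional f ↦ ∑' n, l n * f (φ n) is Lipschitz, hence continuous
  have hcont : Continuous fun f : C(characterSpace ℂ A, ℂ) => ∑' n, l n * f (φ n) := by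
    have hC0 : 0 ≤ C := tsum_nonneg fun n => norm_nonneg _
    apply (LipschitzWith.of_dist_le_mul (K := ⟨C, hC0⟩) ?_).continuous
    intro f g
    have hsub : (∑' n, l n * f (φ n)) - (∑' n, l n * g (φ n))
        = ∑' n, l n * (f - g) (φ n) := by
      rw [← Summable.tsum_sub (hsummf f) (hsummf g)]
      congr 1
      ext n
      simp [mul_sub]
    rw [dist_eq_norm, hsub, dist_eq_norm]
    exact hbnd (f - g)
  -- the functional vanishes on all of C(X, ℂ)
  have hTzero : ∀ f : C(characterSpace ℂ A, ℂ), ∑' n, l n * f (φ n) = 0 := by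
    have hzeroR : ∀ f ∈ R, ∑' n, l n * f (φ n) = 0 := by
      rintro f ⟨a, rfl⟩
      simpa using hvan a
    intro f
    have hfmem : f ∈ closure (R : Set C(characterSpace ℂ A, ℂ)) := by
      have : f ∈ R.topologicalClosure := hdense.symm ▸ trivial
      exact this
    have key : f ∈ closure {g : C(characterSpace ℂ A, ℂ) | ∑' n, l n * g (φ n) = 0} :=
      closure_mono (fun g hg => hzeroR g hg) hfmem
    have hclosed : IsClosed {g : C(characterSpace ℂ A, ℂ) | ∑' n, l n * g (φ n) = 0} :=
      isClosed_eq hcont continuous_const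
    exact hclosed.closure_subset key
  -- now derive a contradiction by testing against a Urysohn function
  have hkpos : (0 : ℝ) < ‖l k‖ := norm_pos_iff.mpr hk
  have htt := (tendsto_order.1 (tendsto_tsum_compl_atTop_zero
    (fun n => ‖l n‖))).2 _ (half_pos hkpos)
  obtain ⟨s₀, hs₀⟩ := Filter.eventually_atTop.1 htt
  set t : Finset ℕ := insert k s₀ with ht
  have htail : ∑' n : {x // x ∉ t}, ‖l n‖ < ‖l k‖ / 2 :=
    hs₀ t (Finset.subset_insert k s₀)
  -- Urysohn: f = 1 at φ k, f = 0 at φ n for n ∈ t, n ≠ k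
  have hclosed1 : IsClosed ((fun n => (φ n : characterSpace ℂ A)) '' ((t : Set ℕ) \ {k})) :=
    Set.Finite.isClosed (Set.Finite.image _ ((t.finite_toSet).diff))
  have hdisj : Disjoint ((fun n => (φ n : characterSpace ℂ A)) '' ((t : Set ℕ) \ {k}))
      {(φ k : characterSpace ℂ A)} := by
    rw [Set.disjoint_singleton_right]
    rintro ⟨n, ⟨-, hn⟩, hφn⟩
    exact hn (hinj hφn)
  obtain ⟨g, hg0, hg1, hg01⟩ :=
    exists_continuous_zero_one_of_isClosed hclosed1 isClosed_singleton hdisj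
  set f : C(characterSpace ℂ A, ℂ) :=
    ⟨fun x => (g x : ℂ), Complex.continuous_ofReal.comp g.continuous⟩ with hf
  have hfk : f (φ k) = 1 := by
    simp [hf, show g (φ k) = 1 from hg1 rfl]
  have hfn : ∀ n ∈ t, n ≠ k → f (φ n) = 0 := by
    intro n hn hnk
    have : g (φ n) = 0 := hg0 ⟨n, ⟨hn, hnk⟩, rfl⟩
    simp [hf, this]
  have hfle : ∀ x, ‖f x‖ ≤ 1 := by
    intro x
    have h01 := hg01 x
    have hfx : f x = (g x : ℂ) := rfl
    rw [hfx, Complex.norm_real, Real.norm_eq_abs, abs_le]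
    exact ⟨by linarith [h01.1], h01.2⟩
  -- split the vanishing sum at t
  have hsplit : ∑ n ∈ t, l n * f (φ n) + ∑' n : {x // x ∉ t}, l n * f (φ n) = 0 := by
    rw [Summable.sum_add_tsum_subtype_compl (hsummf f) t]
    exact hTzero f
  have hsumt : ∑ n ∈ t, l n * f (φ n) = l k := by
    rw [Finset.sum_eq_single k]
    · rw [hfk, mul_one]
    · intro n hn hnk
      rw [hfn n hn hnk, mul_zero]
    · intro hkn
      exact absurd (Finset.mem_insert_self k s₀) hkn
  have hlk : l k = - ∑' n : {x // x ∉ t}, l n * f (φ n) := by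
    rw [← hsumt]; linear_combination hsplit
  have hboundk : ‖l k‖ ≤ ∑' n : {x // x ∉ t}, ‖l n‖ := by
    rw [hlk, norm_neg]
    calc ‖∑' n : {x // x ∉ t}, l n * f (φ n)‖
        ≤ ∑' n : {x // x ∉ t}, ‖l n * f (φ n)‖ :=
          norm_tsum_le_tsum_norm (((hsummf f).subtype _).norm)
      _ ≤ ∑' n : {x // x ∉ t}, ‖l n‖ := by
          apply Summable.tsum_le_tsum _ (((hsummf f).subtype _).norm) (hsum.subtype _)
          intro n
          simp only [Function.comp_apply, norm_mul]
          calc ‖l n.1‖ * ‖f (φ n.1)‖ ≤ ‖l n.1‖ * 1 :=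
                mul_le_mul_of_nonneg_left (hfle _) (norm_nonneg _)
            _ = ‖l n.1‖ := mul_one _
  linarith
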